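/- Let P be a finite atomic lattice and let M be a labeling assigning to each p ∈ P a monomial m_p ∈ K[x_1,…,x_n] (the label m_p = 1 is allowed) satisfying: (C1) m_p ≠ 1 for every meet-irreducible p ∈ P; and (C2) whenever gcd(m_p, m_q) ≠ 1 for p, q ∈ P, the elements p and q are comparable in P. For each atom a of P set x(a) = ∏_{p ∈ P, p ≱ a} m_p. Then the map sending p ∈ P to lcm{x(a) : a an atom of P with a ≤ p} (sending the minimal element to 1) is a lattice isomorphism from P onto the LCM-lattice of the set of monomials {x(a) : a an atom of P}. -/

import Mathlib

/-- The monomial `x(a) = ∏_{p ∈ P, p ≱ a} m_p` attached to an element `a` of a labeled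
finite lattice `P`; monomials are encoded as exponent vectors in `Fin n → ℕ`, so the
product of monomials is the (pointwise) sum of exponent vectors. -/
noncomputable def coordMonomial {P : Type*} [Fintype P] [PartialOrder P]
    [DecidableRel (α := P) (· ≤ ·)] {n : ℕ} (M : P → (Fin n → ℕ)) (a : P) :
    Fin n → ℕ :=
  fun i => ∑ p : P, if a ≤ p then 0 else M p i

/-- The map `P → monomials` sending `p` to `lcm {x(a) : a an atom of P with a ≤ p}`
(and sending `⊥` to `1 = 0` as exponent vector); `lcm` of monomials is the pointwise
`⊔` of exponent vectors. -/
noncomputable def coordMap {P : Type*} [Fintype P] [Lattice P] [OrderBot P]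
    [DecidableRel (α := P) (· ≤ ·)] [DecidablePred (IsAtom : P → Prop)]
    {n : ℕ} (M : P → (Fin n → ℕ)) (p : P) : Fin n → ℕ :=
  Finset.univ.sup (fun a : P => if IsAtom a ∧ a ≤ p then coordMonomial M a else 0)

section Aux

variable {P : Type*} [Fintype P] [Lattice P] [BoundedOrder P]
    [DecidableRel (α := P) (· ≤ ·)] [DecidablePred (IsAtom : P → Prop)]
    {n : ℕ} (M : P → (Fin n → ℕ))

/-- The set of `r` actually contributing to `coordMonomial M x i`. -/
def fsetAux (x : P) (i : Fin n) : Finset P :=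
  Finset.univ.filter (fun r => ¬ x ≤ r ∧ M r i ≠ 0)

lemma mem_fsetAux {x r : P} {i : Fin n} :
    r ∈ fsetAux M x i ↔ ¬ x ≤ r ∧ M r i ≠ 0 := by
  simp [fsetAux]

lemma coordMonomial_eq (x : P) (i : Fin n) :
    coordMonomial M x i = ∑ r ∈ fsetAux M x i, M r i := by
  unfold coordMonomial fsetAux
  rw [Finset.sum_filter]
  apply Finset.sum_congr rfl
  intro r _
  by_cases h : x ≤ r <;> by_cases h2 : M r i = 0 <;> simp [h, h2]

variable (hC2 : ∀ p q : P, (∃ i : Fin n, M p i ≠ 0 ∧ M q i ≠ 0) → (p ≤ q ∨ q ≤ p))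

include hC2 in
lemma fsetAux_nested (x y : P) (i : Fin n) :
    fsetAux M x i ⊆ fsetAux M y i ∨ fsetAux M y i ⊆ fsetAux M x i := by
  by_cases h : fsetAux M x i ⊆ fsetAux M y i
  · exact Or.inl h
  · right
    obtain ⟨r, hrx, hry⟩ := Finset.not_subset.mp h
    rw [mem_fsetAux] at hrx
    have hyr : y ≤ r := by
      by_contra hyr
      exact hry (mem_fsetAux M |>.mpr ⟨hyr, hrx.2⟩)
    intro s hs
    rw [mem_fsetAux] at hs ⊢
    rcases hC2 r s ⟨i, hrx.2, hs.2⟩ with h1 | h2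
    · exact absurd (hyr.trans h1) hs.1
    · exact ⟨fun hxs => hrx.1 (hxs.trans h2), hs.2⟩

include hC2 in
lemma fsetAux_exists_max (x : P) (i : Fin n) (h : (fsetAux M x i).Nonempty) :
    ∃ p ∈ fsetAux M x i, ∀ r ∈ fsetAux M x i, r ≤ p := by
  obtain ⟨p, hp, hmax'⟩ := Finset.exists_maximal h
  have hmax : ∀ r ∈ fsetAux M x i, ¬ p < r := fun r hr hlt => lt_irrefl p (hlt.trans_le (hmax' hr hlt.le))
  refine ⟨p, hp, fun r hr => ?_⟩
  rcases hC2 r p ⟨i, (mem_fsetAux M |>.mp hr).2, (mem_fsetAux M |>.mp hp).2⟩ with h1 | h2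
  · exact h1
  · rcases h2.lt_or_eq with h3 | h3
    · exact absurd h3 (hmax r hr)
    · exact h3.ge

include hC2 in
/-- Key lemma: if `x ≤ sup S` then `coordMonomial x ≤ sup over S of coordMonomial`. -/
lemma coordMonomial_le_sup (x : P) (S : Finset P) (hx : x ≤ S.sup id) (i : Fin n) :
    coordMonomial M x i ≤ S.sup (fun b => coordMonomial M b i) := by
  by_cases hA : ∃ b ∈ S, fsetAux M x i ⊆ fsetAux M b i
  · obtain ⟨b, hb, hsub⟩ := hA
    calc coordMonomial M x i = ∑ r ∈ fsetAux M x i, M r i := coordMonomial_eq M x i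
      _ ≤ ∑ r ∈ fsetAux M b i, M r i :=
          Finset.sum_le_sum_of_subset hsub
      _ = coordMonomial M b i := (coordMonomial_eq M b i).symm
      _ ≤ _ := Finset.le_sup (f := fun b => coordMonomial M b i) hb
  · push_neg at hA
    rcases (fsetAux M x i).eq_empty_or_nonempty with he | hne
    · rw [coordMonomial_eq, he, Finset.sum_empty]; exact Nat.zero_le _
    · obtain ⟨p, hp, hmax⟩ := fsetAux_exists_max M hC2 x i hne
      exfalso
      have hbp : ∀ b ∈ S, b ≤ p := by
        intro b hb
        by_contra hbp
        apply hA b hb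
        intro r hr
        rw [mem_fsetAux] at hr ⊢
        exact ⟨fun hbr => hbp (hbr.trans (hmax r (mem_fsetAux M |>.mpr hr))),
          hr.2⟩
      have : x ≤ p := hx.trans (Finset.sup_le fun b hb => hbp b hb)
      exact (mem_fsetAux M |>.mp hp).1 this

lemma exists_meetirr (a q : P) (haq : ¬ a ≤ q) :
    ∃ p : P, q ≤ p ∧ ¬ a ≤ p ∧ (p ≠ ⊤ ∧ ∀ x y : P, p < x → p < y → x ⊓ y ≠ p) := by
  obtain ⟨p, hp, hmax'⟩ := Finset.exists_maximal
    (s := Finset.univ.filter fun r => q ≤ r ∧ ¬ a ≤ r)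
    ⟨q, by simp [haq]⟩
  have hmax : ∀ r, r ∈ (Finset.univ.filter fun r => q ≤ r ∧ ¬ a ≤ r) → ¬ p < r :=
    fun r hr hlt => lt_irrefl p (hlt.trans_le (hmax' hr hlt.le))
  simp only [Finset.mem_filter, Finset.mem_univ, true_and] at hp
  refine ⟨p, hp.1, hp.2, ?_, ?_⟩
  · rintro rfl; exact hp.2 le_top
  · intro x y hx hy hxy
    have hax : a ≤ x := by
      by_contra h
      exact hmax x (Finset.mem_filter.mpr
        ⟨Finset.mem_univ _, hp.1.trans hx.le, h⟩) hx
    have hay : a ≤ y := by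
      by_contra h
      exact hmax y (Finset.mem_filter.mpr
        ⟨Finset.mem_univ _, hp.1.trans hy.le, h⟩) hy
    exact hp.2 (hxy ▸ le_inf hax hay)

variable (hC1 : ∀ p : P, (p ≠ ⊤ ∧ ∀ a b : P, p < a → p < b → a ⊓ b ≠ p) → M p ≠ 0)

include hC1 hC2 in
lemma coordMap_lt (a q : P) (haq : ¬ a ≤ q) :
    ∃ i, coordMap M q i < coordMonomial M a i := by
  obtain ⟨p, hqp, hap, hmi⟩ := exists_meetirr a q haq
  obtain ⟨i, hMi⟩ : ∃ i, M p i ≠ 0 := by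
    by_contra h
    push_neg at h
    exact hC1 p hmi (funext h)
  refine ⟨i, ?_⟩
  have hpA : p ∈ fsetAux M a i := mem_fsetAux M |>.mpr ⟨hap, hMi⟩
  have hpos : 0 < coordMonomial M a i := by
    rw [coordMonomial_eq]
    have h1 : M p i ≤ ∑ r ∈ fsetAux M a i, M r i :=
      Finset.single_le_sum (f := fun r => M r i) (fun _ _ => Nat.zero_le _) hpA
    omega
  have hkey : ∀ b : P, b ≤ q → coordMonomial M b i < coordMonomial M a i := by
    intro b hbq
    rw [coordMonomial_eq, coordMonomial_eq]
    apply Finset.sum_lt_sum_of_subset ?_ hpA ?_ (Nat.pos_of_ne_zero hMi)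
      (fun _ _ _ => Nat.zero_le _)
    · intro r hr
      rw [mem_fsetAux] at hr ⊢
      rcases hC2 r p ⟨i, hr.2, hMi⟩ with h1 | h2
      · exact ⟨fun har => hap (har.trans h1), hr.2⟩
      · exact absurd ((hbq.trans hqp).trans h2) hr.1
    · rw [mem_fsetAux]
      push_neg
      intro hc
      exact absurd (hbq.trans hqp) hc
  unfold coordMap
  rw [Finset.sup_apply]
  rw [Finset.sup_lt_iff (show (⊥ : ℕ) < coordMonomial M a i from hpos)]
  intro b _
  by_cases h : IsAtom b ∧ b ≤ q
  · simp only [if_pos h]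
    exact hkey b h.2
  · simp only [if_neg h, Pi.zero_apply]
    exact hpos

end Aux

/-- Let `P` be a finite atomic lattice and `M` a labeling of `P` by
monomials of `K[x₁,…,xₙ]` (encoded by exponent vectors, with label `1` encoded by the
vector `0`) satisfying
(C1) `M p ≠ 1` for every meet-irreducible `p`, and
(C2) whenever `gcd (M p, M q) ≠ 1` (i.e. some variable appears in both labels),
`p` and `q` are comparable.
For each atom `a` set `x(a) = ∏_{p ≱ a} M p`.  Then the map `p ↦ lcm {x(a) : a atom, a ≤ p}`
(`⊥ ↦ 1`) is a lattice isomorphism from `P` onto the LCM-lattice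
`{lcm(S) : S ⊆ {x(a) : a atom of P}}` of the monomials `x(a)`: its range is exactly that
LCM-lattice and it is order-reflecting and order-preserving (hence an order isomorphism,
and so a lattice isomorphism, onto it). -/
theorem stmt4 (P : Type*) [Fintype P] [Lattice P] [BoundedOrder P]
    [DecidableRel (α := P) (· ≤ ·)] [DecidablePred (IsAtom : P → Prop)]
    (hatomic : ∀ p : P, p ≠ ⊥ → IsLUB {a : P | IsAtom a ∧ a ≤ p} p)
    (K : Type) [Field K] (n : ℕ) (M : P → (Fin n → ℕ))
    (hC1 : ∀ p : P, (p ≠ ⊤ ∧ ∀ a b : P, p < a → p < b → a ⊓ b ≠ p) → M p ≠ 0)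
    (hC2 : ∀ p q : P, (∃ i : Fin n, M p i ≠ 0 ∧ M q i ≠ 0) → (p ≤ q ∨ q ≤ p)) :
    Set.range (coordMap M) =
      {v : Fin n → ℕ | ∃ S : Finset P, (∀ a ∈ S, IsAtom a) ∧ v = S.sup (coordMonomial M)} ∧
    ∀ p q : P, (coordMap M p ≤ coordMap M q ↔ p ≤ q) := by
  constructor
  · ext v
    simp only [Set.mem_range, Set.mem_setOf_eq]
    constructor
    · rintro ⟨p, rfl⟩
      refine ⟨Finset.univ.filter (fun a => IsAtom a ∧ a ≤ p),
        fun a ha => (Finset.mem_filter.mp ha).2.1, ?_⟩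
      unfold coordMap
      apply le_antisymm
      · apply Finset.sup_le
        intro a _
        by_cases h : IsAtom a ∧ a ≤ p
        · rw [if_pos h]
          exact Finset.le_sup (Finset.mem_filter.mpr ⟨Finset.mem_univ _, h⟩)
        · rw [if_neg h]; exact bot_le
      · apply Finset.sup_le
        intro a ha
        have h := (Finset.mem_filter.mp ha).2
        have h2 : (if IsAtom a ∧ a ≤ p then coordMonomial M a else 0) ≤
          Finset.univ.sup (fun a => if IsAtom a ∧ a ≤ p then coordMonomial M a else 0) :=
          Finset.le_sup (f := fun a => if IsAtom a ∧ a ≤ _ then coordMonomial M a else 0) (Finset.mem_univ a)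
        rwa [if_pos h] at h2
    · rintro ⟨S, hS, rfl⟩
      refine ⟨S.sup id, ?_⟩
      apply le_antisymm
      · unfold coordMap
        apply Finset.sup_le
        intro a _
        by_cases h : IsAtom a ∧ a ≤ S.sup id
        · rw [if_pos h]
          intro i
          rw [Finset.sup_apply]
          exact coordMonomial_le_sup M hC2 a S h.2 i
        · rw [if_neg h]; exact bot_le
      · apply Finset.sup_le
        intro b hb
        have h : IsAtom b ∧ b ≤ S.sup id := ⟨hS b hb, Finset.le_sup (f := id) hb⟩
        have h2 : (if IsAtom b ∧ b ≤ S.sup id then coordMonomial M b else 0) ≤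
          Finset.univ.sup (fun a => if IsAtom a ∧ a ≤ S.sup id then coordMonomial M a else 0) :=
          Finset.le_sup (f := fun a => if IsAtom a ∧ a ≤ _ then coordMonomial M a else 0) (Finset.mem_univ b)
        rwa [if_pos h] at h2
  · intro p q
    constructor
    · intro h
      by_cases hp : p = ⊥
      · simp [hp]
      apply (hatomic p hp).2
      intro a ha
      obtain ⟨haA, hap⟩ := ha
      by_contra haq
      obtain ⟨i, hi⟩ := coordMap_lt M hC2 hC1 a q haq
      have h1 : coordMonomial M a ≤ coordMap M p := by
        have h2 : (if IsAtom a ∧ a ≤ p then coordMonomial M a else 0) ≤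
          Finset.univ.sup (fun a => if IsAtom a ∧ a ≤ p then coordMonomial M a else 0) :=
          Finset.le_sup (f := fun a => if IsAtom a ∧ a ≤ _ then coordMonomial M a else 0) (Finset.mem_univ a)
        rwa [if_pos ⟨haA, hap⟩] at h2
      exact absurd ((h1 i).trans (h i)) (not_le.mpr hi)
    · intro hpq
      unfold coordMap
      apply Finset.sup_le
      intro a _
      by_cases h : IsAtom a ∧ a ≤ p
      · rw [if_pos h]
        have h2 : (if IsAtom a ∧ a ≤ q then coordMonomial M a else 0) ≤
          Finset.univ.sup (fun a => if IsAtom a ∧ a ≤ q then coordMonomial M a else 0) :=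
          Finset.le_sup (f := fun a => if IsAtom a ∧ a ≤ _ then coordMonomial M a else 0) (Finset.mem_univ a)
        rwa [if_pos ⟨h.1, h.2.trans hpq⟩] at h2
      · rw [if_neg h]; exact bot_le
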